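/- Suppose x̃_a ∈ F_κ and x̃_b ∈ F_κ both attain sup_{x ∈ F_κ} S(x). Then for every φ* ∈ Ψ attaining inf_{φ ∈ Ψ} D(φ), one has A_{ψ*}(x̃_a − x̃_b) = 0, where A_{ψ*} = A_o + Σ_j φ*_j A_j. In other words, two solutions of the Sion program can differ only by an element of the intersection, over all dual minimizers φ*, of the kernels of A_{ψ*}. -/

import Mathlib

open Matrix ComplexOrder Pointwise

-- continuity of quadratic forms
lemma auxContQuad {n : ℕ} (A : Matrix (Fin n) (Fin n) ℂ) :
    Continuous fun x : Fin n → ℂ => star x ⬝ᵥ A *ᵥ x := by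
  unfold dotProduct Matrix.mulVec
  refine continuous_finset_sum _ fun i _ => ?_
  exact ((continuous_apply i).star).mul
    (continuous_finset_sum _ fun j _ => continuous_const.mul (continuous_apply j))

lemma auxContLin {n : ℕ} (s : Fin n → ℂ) :
    Continuous fun x : Fin n → ℂ => star s ⬝ᵥ x := by
  unfold dotProduct
  exact continuous_finset_sum _ fun i _ => continuous_const.mul (continuous_apply i)

-- combo identity, complex, quadratic part
lemma auxQuadCombo {n : ℕ} (A : Matrix (Fin n) (Fin n) ℂ) (x y : Fin n → ℂ) (a b : ℝ)
    (hab : a + b = 1) :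
    star ((a : ℝ) • x + (b : ℝ) • y) ⬝ᵥ A *ᵥ ((a : ℝ) • x + (b : ℝ) • y)
      = (a : ℂ) * (star x ⬝ᵥ A *ᵥ x) + (b : ℂ) * (star y ⬝ᵥ A *ᵥ y)
        - ((a : ℂ) * (b : ℂ)) * (star (x - y) ⬝ᵥ A *ᵥ (x - y)) := by
  have hb : (b : ℂ) = 1 - (a : ℂ) := by
    have : (b : ℝ) = 1 - a := by linarith
    push_cast [this]; ring
  have hsm : ∀ (r : ℝ) (v : Fin n → ℂ), (r : ℝ) • v = (r : ℂ) • v := fun r v => by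
    funext i; simp [Complex.real_smul]
  rw [hsm, hsm]
  simp only [star_add, star_sub, star_smul, Matrix.mulVec_add, Matrix.mulVec_smul,
    Matrix.mulVec_sub, dotProduct_add, add_dotProduct, sub_dotProduct, dotProduct_sub,
    smul_dotProduct, dotProduct_smul, smul_eq_mul, Complex.star_def, Complex.conj_ofReal, _root_.map_one, hb]
  ring

lemma auxLinCombo {n : ℕ} (s : Fin n → ℂ) (x y : Fin n → ℂ) (a b : ℝ) :
    star s ⬝ᵥ ((a : ℝ) • x + (b : ℝ) • y)
      = (a : ℂ) * (star s ⬝ᵥ x) + (b : ℂ) * (star s ⬝ᵥ y) := by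
  have hsm : ∀ (r : ℝ) (v : Fin n → ℂ), (r : ℝ) • v = (r : ℂ) • v := fun r v => by
    funext i; simp [Complex.real_smul]
  rw [hsm, hsm]
  simp [dotProduct_add, dotProduct_smul, smul_eq_mul]

lemma auxPieceCombo {n : ℕ} (A : Matrix (Fin n) (Fin n) ℂ) (s : Fin n → ℂ) (c : ℝ)
    (x y : Fin n → ℂ) (a b : ℝ) (hab : a + b = 1) :
    2 * (star s ⬝ᵥ ((a : ℝ) • x + (b : ℝ) • y)).re
        - (star ((a : ℝ) • x + (b : ℝ) • y) ⬝ᵥ A *ᵥ ((a : ℝ) • x + (b : ℝ) • y)).re + c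
      = a * (2 * (star s ⬝ᵥ x).re - (star x ⬝ᵥ A *ᵥ x).re + c)
        + b * (2 * (star s ⬝ᵥ y).re - (star y ⬝ᵥ A *ᵥ y).re + c)
        + (a * b) * (star (x - y) ⬝ᵥ A *ᵥ (x - y)).re := by
  rw [auxQuadCombo A x y a b hab, auxLinCombo s x y a b,
    show ((a : ℂ) * (b : ℂ)) = ((a * b : ℝ) : ℂ) by push_cast; ring]
  simp only [Complex.add_re, Complex.sub_re, Complex.re_ofReal_mul]
  have hb : b = 1 - a := by linarith
  subst hb
  ring

lemma auxMulVecSum {n : ℕ} {J : Type} [Fintype J] (M : J → Matrix (Fin n) (Fin n) ℂ)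
    (x : Fin n → ℂ) : (∑ j, M j) *ᵥ x = ∑ j, (M j) *ᵥ x :=
  map_sum (AddMonoidHom.mk' (fun N : Matrix (Fin n) (Fin n) ℂ => N *ᵥ x)
    (fun N N' => Matrix.add_mulVec N N' x)) _ _

lemma auxDotWeighted {n : ℕ} {J : Type} [Fintype J] (w : J → ℝ)
    (M : J → Matrix (Fin n) (Fin n) ℂ) (x : Fin n → ℂ) :
    star x ⬝ᵥ (∑ j, w j • M j) *ᵥ x = ∑ j, (w j : ℂ) * (star x ⬝ᵥ (M j) *ᵥ x) := by
  rw [auxMulVecSum]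
  have h2 : ∀ v : J → (Fin n → ℂ), star x ⬝ᵥ (∑ j, v j) = ∑ j, star x ⬝ᵥ v j := by
    intro v
    simp only [dotProduct, Finset.sum_apply, Finset.mul_sum]
    exact Finset.sum_comm
  rw [h2]
  refine Finset.sum_congr rfl fun j _ => ?_
  rw [show (w j • M j) *ᵥ x = w j • (M j *ᵥ x) from Matrix.smul_mulVec _ _ _]
  simp [dotProduct_smul, Complex.real_smul]

lemma auxDotWeightedRe {n : ℕ} {J : Type} [Fintype J] (w : J → ℝ)
    (M : J → Matrix (Fin n) (Fin n) ℂ) (x : Fin n → ℂ) :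
    (star x ⬝ᵥ (∑ j, w j • M j) *ᵥ x).re = ∑ j, w j * (star x ⬝ᵥ (M j) *ᵥ x).re := by
  rw [auxDotWeighted, Complex.re_sum]
  exact Finset.sum_congr rfl fun j _ => Complex.re_ofReal_mul _ _

lemma auxRealSmul {n : ℕ} (t : ℝ) (v : Fin n → ℂ) : (t : ℝ) • v = (t : ℂ) • v := by
  funext i; simp [Complex.real_smul]

lemma auxLinScale {n : ℕ} (s x : Fin n → ℂ) (t : ℝ) :
    (star s ⬝ᵥ ((t : ℝ) • x)).re = t * (star s ⬝ᵥ x).re := by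
  rw [auxRealSmul]
  simp [dotProduct_smul, Complex.real_smul, Complex.re_ofReal_mul]

lemma auxQuadScale {n : ℕ} (A : Matrix (Fin n) (Fin n) ℂ) (x : Fin n → ℂ) (t : ℝ) :
    (star ((t : ℝ) • x) ⬝ᵥ A *ᵥ ((t : ℝ) • x)).re = t ^ 2 * (star x ⬝ᵥ A *ᵥ x).re := by
  rw [auxRealSmul]
  simp only [star_smul, Matrix.mulVec_smul, smul_dotProduct, dotProduct_smul, smul_eq_mul,
    Complex.star_def, Complex.conj_ofReal]
  rw [show (t : ℂ) * ((t : ℂ) * (star x ⬝ᵥ A *ᵥ x)) = ((t ^ 2 : ℝ) : ℂ) * (star x ⬝ᵥ A *ᵥ x) by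
    push_cast; ring]
  exact Complex.re_ofReal_mul _ _

lemma auxHermWeighted {n : ℕ} {J : Type} [Fintype J] (w : J → ℝ)
    (M : J → Matrix (Fin n) (Fin n) ℂ) (hM : ∀ j, (M j).IsHermitian) :
    (∑ j, w j • M j).IsHermitian := by
  unfold Matrix.IsHermitian at *
  rw [Matrix.conjTranspose_sum]
  exact Finset.sum_congr rfl fun j _ => by rw [Matrix.conjTranspose_smul, star_trivial, hM j]

lemma auxHermStar {n : ℕ} {M : Matrix (Fin n) (Fin n) ℂ} (hM : M.IsHermitian) (x : Fin n → ℂ) :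
    star (star x ⬝ᵥ M *ᵥ x) = star x ⬝ᵥ M *ᵥ x := by
  calc star (star x ⬝ᵥ M *ᵥ x) = star (M *ᵥ x) ⬝ᵥ x := by rw [star_dotProduct, star_star]
    _ = (star x ᵥ* Mᴴ) ⬝ᵥ x := by rw [Matrix.star_mulVec]
    _ = star x ⬝ᵥ M *ᵥ x := by rw [hM.eq, ← Matrix.dotProduct_mulVec]

lemma auxPSDofCompact {n : ℕ} {J : Type} [Fintype J]
    (A : J → Matrix (Fin n) (Fin n) ℂ) (hA : ∀ j, (A j).IsHermitian)
    (s : J → Fin n → ℂ) (c : J → ℝ) (κ : J → ℝ)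
    (hcpt : IsCompact {x : Fin n → ℂ |
      0 ≤ ∑ j, κ j * (2 * (star (s j) ⬝ᵥ x).re - (star x ⬝ᵥ (A j).mulVec x).re + c j)}) :
    (∑ j, κ j • A j).PosSemidef := by
  have herm := auxHermWeighted κ A hA
  refine PosSemidef.of_dotProduct_mulVec_nonneg herm fun x => ?_
  by_contra hq
  set q : ℂ := star x ⬝ᵥ (∑ j, κ j • A j) *ᵥ x with hqdef
  have hstar : star q = q := auxHermStar herm x
  have him : q.im = 0 := by
    have h1 := congrArg Complex.im hstar
    rw [show (star q).im = -q.im from Complex.conj_im q] at h1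
    linear_combination (-(1:ℝ)/2) * h1
  have hre : q.re < 0 := by
    by_contra h
    push_neg at h
    exact hq (Complex.le_def.2 ⟨by simpa using h, by simp [him]⟩)
  have hx0 : x ≠ 0 := by
    rintro rfl
    simp [hqdef] at hre
  have hvn : 0 < ‖x‖ := norm_pos_iff.2 hx0
  obtain ⟨R, hR⟩ := hcpt.isBounded.exists_norm_le
  set α : ℝ := -q.re with hα
  have hαpos : 0 < α := neg_pos.mpr hre
  set B : ℝ := ∑ j, κ j * (star (s j) ⬝ᵥ x).re with hB
  set C : ℝ := ∑ j, κ j * c j with hC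
  set t : ℝ := max 1 (max ((2 * |B| + |C|) / α) ((R + 1) / ‖x‖)) with ht
  have ht1 : 1 ≤ t := le_max_left _ _
  have ht0 : 0 < t := lt_of_lt_of_le one_pos ht1
  have htB : (2 * |B| + |C|) / α ≤ t := le_trans (le_max_left _ _) (le_max_right _ _)
  have htR : (R + 1) / ‖x‖ ≤ t := le_trans (le_max_right _ _) (le_max_right _ _)
  have hquadsum : ∑ j, κ j * (star x ⬝ᵥ (A j).mulVec x).re = q.re := by
    rw [hqdef, auxDotWeightedRe]
  have hval : ∑ j, κ j * (2 * (star (s j) ⬝ᵥ ((t : ℝ) • x)).re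
      - (star ((t : ℝ) • x) ⬝ᵥ (A j).mulVec ((t : ℝ) • x)).re + c j)
      = 2 * t * B + t ^ 2 * α + C := by
    have e1 : ∀ j ∈ (Finset.univ : Finset J),
        κ j * (2 * (t * (star (s j) ⬝ᵥ x).re) - t ^ 2 * (star x ⬝ᵥ (A j).mulVec x).re + c j)
          = 2 * t * (κ j * (star (s j) ⬝ᵥ x).re)
            + -(t ^ 2 * (κ j * (star x ⬝ᵥ (A j).mulVec x).re)) + κ j * c j := fun j _ => by ring
    simp only [auxLinScale, auxQuadScale]
    rw [Finset.sum_congr rfl e1, Finset.sum_add_distrib, Finset.sum_add_distrib,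
      Finset.sum_neg_distrib, ← Finset.mul_sum, ← Finset.mul_sum, hquadsum]
    rw [hα, hB, hC]
    ring
  have hmem : (t : ℝ) • x ∈ {x : Fin n → ℂ |
      0 ≤ ∑ j, κ j * (2 * (star (s j) ⬝ᵥ x).re - (star x ⬝ᵥ (A j).mulVec x).re + c j)} := by
    rw [Set.mem_setOf_eq, hval]
    have hb1 : |B| ≥ B := le_abs_self B
    have hb2 : |B| ≥ -B := neg_le_abs B
    have hc2 : |C| ≥ -C := neg_le_abs C
    have h3 : 2 * |B| + |C| ≤ t * α := (div_le_iff₀ hαpos).mp htB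
    clear hq
    nlinarith [mul_le_mul_of_nonneg_left h3 ht0.le,
      mul_le_mul_of_nonneg_left hb2 (by positivity : (0:ℝ) ≤ 2 * t),
      mul_le_mul_of_nonneg_right ht1 (abs_nonneg C)]
  have hnorm := hR _ hmem
  rw [norm_smul, Real.norm_eq_abs, abs_of_pos ht0] at hnorm
  have : R + 1 ≤ t * ‖x‖ := (div_le_iff₀ hvn).mp htR
  clear hq
  linarith

/-- Corollary to Lemma 2. Two maximizers of the Sion function over `Fκ`
differ only by an element of the kernel of `A_{ψ*}` for every dual minimizer `φ*`. -/
theorem sion_maximizers_differ_in_kernel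
    (n : ℕ) (hn : 1 ≤ n) (J : Type) [Fintype J]
    (Ao : Matrix (Fin n) (Fin n) ℂ) (A : J → Matrix (Fin n) (Fin n) ℂ)
    (so : Fin n → ℂ) (s : J → Fin n → ℂ) (co : ℝ) (c : J → ℝ)
    (hAo : Ao.IsHermitian) (hA : ∀ j, (A j).IsHermitian)
    (fo : (Fin n → ℂ) → ℝ)
    (hfo : ∀ x, fo x = 2 * (star so ⬝ᵥ x).re - (star x ⬝ᵥ Ao.mulVec x).re + co)
    (f : J → (Fin n → ℂ) → ℝ)
    (hf : ∀ j x, f j x = 2 * (star (s j) ⬝ᵥ x).re - (star x ⬝ᵥ (A j).mulVec x).re + c j)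
    (L : (J → ℝ) → (Fin n → ℂ) → ℝ)
    (hL : ∀ φ x, L φ x = fo x + ∑ j, φ j * f j x)
    (Ψ : Set (J → ℝ))
    (hΨ : Ψ = {φ | (∀ j, 0 ≤ φ j) ∧ (Ao + ∑ j, φ j • A j).PosSemidef})
    (hΨne : Ψ.Nonempty)
    (κ : J → ℝ) (hκ : ∀ j, 0 ≤ κ j)
    (Fκ : Set (Fin n → ℂ))
    (hFκ : Fκ = {x | 0 ≤ ∑ j, κ j * f j x})
    (hFκne : Fκ.Nonempty) (hFκcpt : IsCompact Fκ)
    (D : (J → ℝ) → ℝ)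
    (hD : ∀ φ, D φ = sSup ((fun x => L φ x) '' Fκ))
    (S : (Fin n → ℂ) → EReal)
    (hS : ∀ x, S x = ⨅ φ ∈ Ψ, (L φ x : EReal))
    (xa : Fin n → ℂ) (hxa : xa ∈ Fκ) (hxamax : ∀ x ∈ Fκ, S x ≤ S xa)
    (xb : Fin n → ℂ) (hxb : xb ∈ Fκ) (hxbmax : ∀ x ∈ Fκ, S x ≤ S xb) :
    ∀ φs ∈ Ψ, (∀ φ ∈ Ψ, D φs ≤ D φ) →
      (Ao + ∑ j, φs j • A j).mulVec (xa - xb) = 0 := by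
  classical
  intro φs hφsΨ hmin
  -- concrete description of `Fκ`
  have hconcrete : Fκ = {x : Fin n → ℂ |
      0 ≤ ∑ j, κ j * (2 * (star (s j) ⬝ᵥ x).re - (star x ⬝ᵥ (A j).mulVec x).re + c j)} := by
    rw [hFκ]; ext x; simp only [Set.mem_setOf_eq, hf]
  have hAκ : (∑ j, κ j • A j).PosSemidef :=
    auxPSDofCompact A hA s c κ (hconcrete ▸ hFκcpt)
  -- continuity of `L φ`
  have hcont : ∀ φ, Continuous fun x => L φ x := by
    intro φ
    have h1 : (fun x => L φ x) = fun x => (2 * (star so ⬝ᵥ x).re - (star x ⬝ᵥ Ao.mulVec x).re + co)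
        + ∑ j, φ j * (2 * (star (s j) ⬝ᵥ x).re - (star x ⬝ᵥ (A j).mulVec x).re + c j) := by
      funext x; rw [hL, hfo]; congr 1; exact Finset.sum_congr rfl fun j _ => by rw [hf]
    rw [h1]
    have hp : ∀ (M : Matrix (Fin n) (Fin n) ℂ) (v : Fin n → ℂ) (d : ℝ), Continuous fun x : Fin n → ℂ =>
        2 * (star v ⬝ᵥ x).re - (star x ⬝ᵥ M.mulVec x).re + d := fun M v d =>
      (((continuous_const.mul (Complex.continuous_re.comp (auxContLin v))).sub
        (Complex.continuous_re.comp (auxContQuad M))).add continuous_const)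
    exact (hp Ao so co).add (continuous_finset_sum _ fun j _ =>
      continuous_const.mul (hp (A j) (s j) (c j)))
  -- decomposition of the quadratic form of `Ao + ∑ φ j • A j`
  have hd : ∀ (φ : J → ℝ) (v : Fin n → ℂ),
      (star v ⬝ᵥ (Ao + ∑ j, φ j • A j) *ᵥ v).re
        = (star v ⬝ᵥ Ao *ᵥ v).re + ∑ j, φ j * (star v ⬝ᵥ (A j) *ᵥ v).re := by
    intro φ v
    rw [Matrix.add_mulVec, dotProduct_add, Complex.add_re, auxDotWeightedRe]
  -- combination identity for `L`
  have hLcombo : ∀ (φ : J → ℝ) (x y : Fin n → ℂ) (a b : ℝ), a + b = 1 →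
      L φ (a • x + b • y) = a * L φ x + b * L φ y
        + (a * b) * (star (x - y) ⬝ᵥ (Ao + ∑ j, φ j • A j) *ᵥ (x - y)).re := by
    intro φ x y a b hab
    have hfoc : fo (a • x + b • y) = a * fo x + b * fo y
        + (a * b) * (star (x - y) ⬝ᵥ Ao *ᵥ (x - y)).re := by
      rw [hfo, hfo, hfo]; exact auxPieceCombo Ao so co x y a b hab
    have hfjc : ∀ j, f j (a • x + b • y) = a * f j x + b * f j y
        + (a * b) * (star (x - y) ⬝ᵥ (A j) *ᵥ (x - y)).re := fun j => by
      rw [hf, hf, hf]; exact auxPieceCombo (A j) (s j) (c j) x y a b hab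
    rw [hL, hL, hL, hfoc, Finset.sum_congr rfl (fun j _ => by rw [hfjc j]), hd]
    rw [Finset.sum_congr rfl (fun j (_ : j ∈ Finset.univ) =>
      (by ring : φ j * (a * f j x + b * f j y
          + (a * b) * (star (x - y) ⬝ᵥ (A j) *ᵥ (x - y)).re)
        = a * (φ j * f j x) + b * (φ j * f j y)
          + (a * b) * (φ j * (star (x - y) ⬝ᵥ (A j) *ᵥ (x - y)).re)))]
    rw [Finset.sum_add_distrib, Finset.sum_add_distrib, ← Finset.mul_sum, ← Finset.mul_sum,
      ← Finset.mul_sum]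
    ring
  -- nonnegativity of quadratic forms for `φ ∈ Ψ`
  have hPSDre : ∀ φ ∈ Ψ, ∀ v : Fin n → ℂ,
      0 ≤ (star v ⬝ᵥ (Ao + ∑ j, φ j • A j) *ᵥ v).re := by
    intro φ hφ v
    rw [hΨ] at hφ
    have h0 := (Complex.le_def.1 (hφ.2.dotProduct_mulVec_nonneg v)).1
    simpa using h0
  -- convexity of `Fκ`
  have hFκconv : Convex ℝ Fκ := by
    intro x hx y hy a b ha hb hab
    rw [hFκ] at hx hy ⊢
    simp only [Set.mem_setOf_eq] at hx hy ⊢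
    have hfjc : ∀ j, f j (a • x + b • y) = a * f j x + b * f j y
        + (a * b) * (star (x - y) ⬝ᵥ (A j) *ᵥ (x - y)).re := fun j => by
      rw [hf, hf, hf]; exact auxPieceCombo (A j) (s j) (c j) x y a b hab
    rw [Finset.sum_congr rfl (fun j (_ : j ∈ Finset.univ) =>
      (show κ j * f j (a • x + b • y)
          = a * (κ j * f j x) + b * (κ j * f j y)
            + (a * b) * (κ j * (star (x - y) ⬝ᵥ (A j) *ᵥ (x - y)).re) by
        rw [hfjc j]; ring))]
    rw [Finset.sum_add_distrib, Finset.sum_add_distrib, ← Finset.mul_sum, ← Finset.mul_sum,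
      ← Finset.mul_sum]
    have hq : 0 ≤ ∑ j, κ j * (star (x - y) ⬝ᵥ (A j) *ᵥ (x - y)).re := by
      rw [← auxDotWeightedRe]
      have h0 := (Complex.le_def.1 (hAκ.dotProduct_mulVec_nonneg (x - y))).1
      simpa using h0
    have := mul_nonneg (mul_nonneg ha hb) hq
    have h1 := mul_nonneg ha hx
    have h2 := mul_nonneg hb hy
    linarith
  -- convexity of `Ψ`
  have hΨconv : Convex ℝ Ψ := by
    intro φ hφ φ' hφ' a b ha hb hab
    rw [hΨ] at hφ hφ' ⊢
    refine ⟨fun j => add_nonneg (mul_nonneg ha (hφ.1 j)) (mul_nonneg hb (hφ'.1 j)), PosSemidef.of_dotProduct_mulVec_nonneg ?_ ?_⟩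
    · exact hAo.add (auxHermWeighted _ A hA)
    · intro v
      have herm : (Ao + ∑ j, (a • φ + b • φ') j • A j).IsHermitian :=
        hAo.add (auxHermWeighted _ A hA)
      have him : (star v ⬝ᵥ (Ao + ∑ j, (a • φ + b • φ') j • A j) *ᵥ v).im = 0 := by
        have h1 := congrArg Complex.im (auxHermStar herm v)
        rw [show (star (star v ⬝ᵥ (Ao + ∑ j, (a • φ + b • φ') j • A j) *ᵥ v)).im
            = -(star v ⬝ᵥ (Ao + ∑ j, (a • φ + b • φ') j • A j) *ᵥ v).im from
          Complex.conj_im _] at h1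
        linear_combination (-(1:ℝ)/2) * h1
      have hre : 0 ≤ (star v ⬝ᵥ (Ao + ∑ j, (a • φ + b • φ') j • A j) *ᵥ v).re := by
        rw [hd]
        have e1 := hd φ v
        have e2 := hd φ' v
        have h1 := (Complex.le_def.1 (hφ.2.dotProduct_mulVec_nonneg v)).1
        have h2 := (Complex.le_def.1 (hφ'.2.dotProduct_mulVec_nonneg v)).1
        simp only [Complex.zero_re] at h1 h2
        rw [e1] at h1; rw [e2] at h2
        have hsum : ∑ j, (a • φ + b • φ') j * (star v ⬝ᵥ (A j) *ᵥ v).re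
            = a * ∑ j, φ j * (star v ⬝ᵥ (A j) *ᵥ v).re
              + b * ∑ j, φ' j * (star v ⬝ᵥ (A j) *ᵥ v).re := by
          rw [Finset.mul_sum, Finset.mul_sum, ← Finset.sum_add_distrib]
          refine Finset.sum_congr rfl fun j _ => ?_
          simp only [Pi.add_apply, Pi.smul_apply, smul_eq_mul]
          ring
        rw [hsum]
        calc (0:ℝ) ≤ a * ((star v ⬝ᵥ Ao *ᵥ v).re + ∑ j, φ j * (star v ⬝ᵥ (A j) *ᵥ v).re)
              + b * ((star v ⬝ᵥ Ao *ᵥ v).re + ∑ j, φ' j * (star v ⬝ᵥ (A j) *ᵥ v).re) :=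
            add_nonneg (mul_nonneg ha h1) (mul_nonneg hb h2)
          _ = (star v ⬝ᵥ Ao *ᵥ v).re + (a * ∑ j, φ j * (star v ⬝ᵥ (A j) *ᵥ v).re
              + b * ∑ j, φ' j * (star v ⬝ᵥ (A j) *ᵥ v).re) := by
            linear_combination (star v ⬝ᵥ Ao *ᵥ v).re * hab
      exact Complex.le_def.2 ⟨by simpa using hre, by simpa using him.symm⟩
  -- upper bounds from `D`
  have hDub : ∀ (φ : J → ℝ), ∀ x ∈ Fκ, L φ x ≤ D φ := by
    intro φ x hx
    rw [hD]
    exact le_csSup ((hFκcpt.image (hcont φ)).bddAbove) ⟨x, hx, rfl⟩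
  have hDmem : ∀ φ : J → ℝ, ∃ x ∈ Fκ, D φ = L φ x := by
    intro φ
    have h := (hFκcpt.image (hcont φ)).sSup_mem (hFκne.image _)
    rw [← hD φ] at h
    obtain ⟨x, hx, hxe⟩ := h
    exact ⟨x, hx, hxe.symm⟩
  -- the key minimax property
  have key : ∃ x ∈ Fκ, ∀ φ ∈ Ψ, D φs ≤ L φ x := by
    have hclosed : ∀ p : {φ // φ ∈ Ψ}, IsClosed {x : Fin n → ℂ | D φs ≤ L p.1 x} :=
      fun p => isClosed_le continuous_const (hcont p.1)
    have hfin : ∀ u : Finset {φ // φ ∈ Ψ},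
        (Fκ ∩ ⋂ p ∈ u, {x : Fin n → ℂ | D φs ≤ L p.1 x}).Nonempty := by
      intro u
      by_contra hne
      rw [Set.not_nonempty_iff_eq_empty] at hne
      have hviol : ∀ x ∈ Fκ, ∃ p ∈ u, L p.1 x < D φs := by
        intro x hx
        by_contra hcon
        push_neg at hcon
        have hxmem : x ∈ Fκ ∩ ⋂ p ∈ u, {x : Fin n → ℂ | D φs ≤ L p.1 x} :=
          ⟨hx, Set.mem_iInter₂.2 fun p hp => hcon p hp⟩
        rw [hne] at hxmem
        exact hxmem
      obtain ⟨x₀, hx₀⟩ := hFκne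
      set g : (Fin n → ℂ) → ({p : {φ // φ ∈ Ψ} // p ∈ u} → ℝ) := fun x i => L i.1.1 x with hg
      have hgcont : Continuous g := continuous_pi fun i => hcont i.1.1
      set U : Set ({p : {φ // φ ∈ Ψ} // p ∈ u} → ℝ) := {v | ∃ x ∈ Fκ, ∀ i, v i ≤ g x i} with hU
      have hgx₀U : g x₀ ∈ U := ⟨x₀, hx₀, fun i => le_refl _⟩
      have hUconv : Convex ℝ U := by
        rintro v ⟨x, hx, hvx⟩ w ⟨y, hy, hwy⟩ a b ha hb hab
        refine ⟨a • x + b • y, hFκconv hx hy ha hb hab, fun i => ?_⟩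
        have hpsd := hPSDre i.1.1 i.1.2 (x - y)
        show (a • v + b • w) i ≤ L i.1.1 (a • x + b • y)
        calc (a • v + b • w) i = a * v i + b * w i := rfl
          _ ≤ a * L i.1.1 x + b * L i.1.1 y :=
            add_le_add (mul_le_mul_of_nonneg_left (hvx i) ha)
              (mul_le_mul_of_nonneg_left (hwy i) hb)
          _ ≤ L i.1.1 (a • x + b • y) := by
            rw [hLcombo i.1.1 x y a b hab]
            nlinarith [mul_nonneg (mul_nonneg ha hb) hpsd]
      have hUclosed : IsClosed U := by
        have heq : U = (g '' Fκ) + {w : {p : {φ // φ ∈ Ψ} // p ∈ u} → ℝ | ∀ i, w i ≤ 0} := by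
          ext v
          constructor
          · rintro ⟨x, hx, hvx⟩
            have hv : v = g x + (v - g x) := by abel
            rw [hv]
            exact Set.add_mem_add ⟨x, hx, rfl⟩ (fun i => sub_nonpos.2 (hvx i))
          · intro hv
            rw [Set.mem_add] at hv
            obtain ⟨p, ⟨x, hx, rfl⟩, w, hw, rfl⟩ := hv
            exact ⟨x, hx, fun i => by have h := hw i; simp only [Pi.add_apply]; linarith⟩
        rw [heq]
        have ht : IsClosed {w : {p : {φ // φ ∈ Ψ} // p ∈ u} → ℝ | ∀ i, w i ≤ 0} := by
          have h2 : {w : {p : {φ // φ ∈ Ψ} // p ∈ u} → ℝ | ∀ i, w i ≤ 0}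
              = ⋂ i, {w | w i ≤ 0} := by
            ext w; simp [Set.mem_iInter]
          rw [h2]
          exact isClosed_iInter fun i => isClosed_le (continuous_apply i) continuous_const
        exact ht.add_left_of_isCompact (hFκcpt.image hgcont)
      have hccnot : (fun _ => D φs : {p : {φ // φ ∈ Ψ} // p ∈ u} → ℝ) ∉ U := by
        rintro ⟨x, hx, hvx⟩
        obtain ⟨p, hp, hlt⟩ := hviol x hx
        exact absurd (hvx ⟨p, hp⟩) (not_le.2 hlt)
      obtain ⟨F, r, hFU, hFc⟩ := geometric_hahn_banach_closed_point hUconv hUclosed hccnot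
      set lam : {p : {φ // φ ∈ Ψ} // p ∈ u} → ℝ := fun i => F (Pi.single i 1) with hlam
      have hsingle : ∀ i, F (Pi.single i (1:ℝ)) = lam i := fun i => by rw [hlam]
      have hrep : ∀ v : {p : {φ // φ ∈ Ψ} // p ∈ u} → ℝ, F v = ∑ i, v i * lam i := by
        intro v
        have hv : v = ∑ i, v i • (Pi.single i (1:ℝ) : {p : {φ // φ ∈ Ψ} // p ∈ u} → ℝ) := by
          have h1 : ∀ i, v i • (Pi.single i (1:ℝ) : {p : {φ // φ ∈ Ψ} // p ∈ u} → ℝ) = Pi.single i (v i) := by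
            intro i; funext j
            by_cases h : j = i
            · subst h; simp
            · simp [Pi.single_eq_of_ne h]
          rw [Finset.sum_congr rfl (fun i _ => h1 i), Finset.univ_sum_single]
        conv_lhs => rw [hv]
        rw [map_sum]
        exact Finset.sum_congr rfl fun i _ => by
          rw [_root_.map_smul, hsingle i]; simp [smul_eq_mul, mul_comm]
      have hlamnn : ∀ i, 0 ≤ lam i := by
        intro i
        by_contra hneg
        push_neg at hneg
        have hpos : 0 < -(lam i) := neg_pos.2 hneg
        have hgr : F (g x₀) < r := hFU _ hgx₀U
        set tl : ℝ := (r - F (g x₀)) / (-(lam i)) + 1 with htl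
        have htpos : 0 < tl := by
          have h6 : 0 < (r - F (g x₀)) / (-(lam i)) := div_pos (by linarith) hpos
          rw [htl]; linarith
        have hmemU : g x₀ - tl • (Pi.single i (1:ℝ) : {p : {φ // φ ∈ Ψ} // p ∈ u} → ℝ) ∈ U := by
          refine ⟨x₀, hx₀, fun i' => ?_⟩
          have hnn : 0 ≤ tl * (Pi.single i (1:ℝ) : {p : {φ // φ ∈ Ψ} // p ∈ u} → ℝ) i' := by
            refine mul_nonneg htpos.le ?_
            by_cases h : i' = i
            · subst h; simp
            · simp [Pi.single_eq_of_ne h]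
          simp only [Pi.sub_apply, Pi.smul_apply, smul_eq_mul]
          linarith
        have hlt := hFU _ hmemU
        rw [map_sub, _root_.map_smul, hsingle i, smul_eq_mul] at hlt
        have h7 : r - F (g x₀) ≤ tl * (-(lam i)) := by
          rw [htl, add_mul, one_mul, div_mul_cancel₀ _ (ne_of_gt hpos)]
          linarith
        linarith
      have hT : 0 < ∑ i, lam i := by
        rcases (Finset.sum_nonneg fun i _ => hlamnn i).lt_or_eq with h | h0
        · exact h
        exfalso
        have hz : ∀ i, lam i = 0 := fun i =>
          (Finset.sum_eq_zero_iff_of_nonneg (fun i _ => hlamnn i)).1 h0.symm i (Finset.mem_univ i)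
        have hF0 : ∀ v, F v = 0 := fun v => by rw [hrep]; simp [hz]
        have hgr := hFU _ hgx₀U
        rw [hF0] at hgr
        rw [hF0] at hFc
        linarith
      set wgt : {p : {φ // φ ∈ Ψ} // p ∈ u} → ℝ := fun i => lam i / (∑ i, lam i) with hwgt
      have hwsum : ∑ i, wgt i = 1 := by
        simp only [hwgt]
        rw [← Finset.sum_div, div_self (ne_of_gt hT)]
      have hphiLmem : (∑ i, wgt i • (i.1.1 : J → ℝ)) ∈ Ψ :=
        hΨconv.sum_mem (fun i _ => div_nonneg (hlamnn i) hT.le) hwsum (fun i _ => i.1.2)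
      set phiL : J → ℝ := ∑ i, wgt i • (i.1.1 : J → ℝ) with hphiLdef
      have hphiLj : ∀ j, phiL j = ∑ i, wgt i * i.1.1 j := by
        intro j; rw [hphiLdef]; simp [Finset.sum_apply, Pi.smul_apply, smul_eq_mul]
      have hLlam : ∀ y, L phiL y = ∑ i, wgt i * L i.1.1 y := by
        intro y
        rw [hL]
        calc fo y + ∑ j, phiL j * f j y
            = fo y + ∑ j, ∑ i, wgt i * (i.1.1 j * f j y) := by
              congr 1
              refine Finset.sum_congr rfl fun j _ => ?_
              rw [hphiLj j, Finset.sum_mul]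
              exact Finset.sum_congr rfl fun i _ => by ring
          _ = fo y + ∑ i, ∑ j, wgt i * (i.1.1 j * f j y) := by rw [Finset.sum_comm]
          _ = (∑ i, wgt i) * fo y + ∑ i, wgt i * ∑ j, i.1.1 j * f j y := by
              rw [hwsum, one_mul]
              congr 1
              exact Finset.sum_congr rfl fun i _ => (Finset.mul_sum _ _ _).symm
          _ = ∑ i, (wgt i * fo y + wgt i * ∑ j, i.1.1 j * f j y) := by
              rw [Finset.sum_add_distrib, ← Finset.sum_mul]
          _ = ∑ i, wgt i * L i.1.1 y :=
              Finset.sum_congr rfl fun i _ => by rw [hL]; ring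
      obtain ⟨x₁, hx₁, hDx₁⟩ := hDmem phiL
      have h4 : F (g x₁) < r := hFU _ ⟨x₁, hx₁, fun i => le_refl _⟩
      have h5 : r < D φs * ∑ i, lam i := by
        have h5a := hFc
        rw [hrep (fun _ => D φs)] at h5a
        rwa [← Finset.mul_sum] at h5a
      have h6 : L phiL x₁ < D φs := by
        rw [hLlam]
        have he2 : F (g x₁) = ∑ i, L i.1.1 x₁ * lam i := hrep (g x₁)
        calc ∑ i, wgt i * L i.1.1 x₁ = (∑ i, L i.1.1 x₁ * lam i) / (∑ i, lam i) := by
              rw [Finset.sum_div]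
              exact Finset.sum_congr rfl fun i _ => by simp only [hwgt]; ring
          _ = F (g x₁) / (∑ i, lam i) := by rw [he2]
          _ < D φs := (div_lt_iff₀ hT).2 (h4.trans h5)
      have h7 : D phiL < D φs := by rw [hDx₁]; exact h6
      exact absurd (hmin phiL hphiLmem) (not_le.2 h7)
    obtain ⟨x, hxmem⟩ := hFκcpt.inter_iInter_nonempty _ hclosed hfin
    exact ⟨x, hxmem.1, fun φ hφ => Set.mem_iInter.1 hxmem.2 ⟨φ, hφ⟩⟩
  -- conclude
  obtain ⟨x₀, hx₀, hkey⟩ := key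
  have hSx : ∀ xm, xm ∈ Fκ → (∀ x ∈ Fκ, S x ≤ S xm) → L φs xm = D φs := by
    intro xm hxm hmax
    have h1 : (D φs : EReal) ≤ S x₀ := by
      rw [hS]
      exact le_iInf₂ fun φ hφ => EReal.coe_le_coe_iff.2 (hkey φ hφ)
    have h2 : S xm ≤ (L φs xm : EReal) := by
      rw [hS]
      exact iInf₂_le φs hφsΨ
    have h3 := h1.trans ((hmax x₀ hx₀).trans h2)
    exact le_antisymm (hDub φs xm hxm) (EReal.coe_le_coe_iff.1 h3)
  have hLa := hSx xa hxa hxamax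
  have hLb := hSx xb hxb hxbmax
  have hmem : (1/2 : ℝ) • xa + (1/2 : ℝ) • xb ∈ Fκ :=
    hFκconv hxa hxb (by norm_num) (by norm_num) (by norm_num)
  have hub := hDub φs _ hmem
  rw [hLcombo φs xa xb (1/2) (1/2) (by norm_num), hLa, hLb] at hub
  have hQle : (star (xa - xb) ⬝ᵥ (Ao + ∑ j, φs j • A j) *ᵥ (xa - xb)).re ≤ 0 := by linarith
  have hQge := hPSDre φs hφsΨ (xa - xb)
  have hφs' := hφsΨ
  rw [hΨ] at hφs'
  have herm : (Ao + ∑ j, φs j • A j).IsHermitian := hφs'.2.1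
  have him : (star (xa - xb) ⬝ᵥ (Ao + ∑ j, φs j • A j) *ᵥ (xa - xb)).im = 0 := by
    have h1 := congrArg Complex.im (auxHermStar herm (xa - xb))
    rw [show (star (star (xa - xb) ⬝ᵥ (Ao + ∑ j, φs j • A j) *ᵥ (xa - xb))).im
        = -(star (xa - xb) ⬝ᵥ (Ao + ∑ j, φs j • A j) *ᵥ (xa - xb)).im from
      Complex.conj_im _] at h1
    linear_combination (-(1:ℝ)/2) * h1
  have hq0 : star (xa - xb) ⬝ᵥ (Ao + ∑ j, φs j • A j) *ᵥ (xa - xb) = 0 :=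
    Complex.ext (le_antisymm hQle hQge) (by simpa using him)
  exact (hφs'.2.dotProduct_mulVec_zero_iff (xa - xb)).1 hq0
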